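/- For every integer d ≥ 2, the equation (d+1)(1−t) + (1+dt) log t = 0 has a unique root t_d^* in the open interval (0,1). -/

import Mathlib

/-- For every integer `d ≥ 2`, the equation
`(d+1)(1−t) + (1+dt)·log t = 0` has a unique root `t_d^*` in `(0, 1)`. -/
theorem statement13 (d : ℕ) (hd : 2 ≤ d) :
    ∃! t : ℝ, t ∈ Set.Ioo (0 : ℝ) 1 ∧
      ((d : ℝ) + 1) * (1 - t) + (1 + (d : ℝ) * t) * Real.log t = 0 := by
  set D : ℝ := (d : ℝ) with hDdef
  have hD : (2 : ℝ) ≤ D := by rw [hDdef]; exact_mod_cast hd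
  set h : ℝ → ℝ := fun t => Real.log t + (D + 1) * (1 - t) / (1 + D * t) with hh
  set c : ℝ := 1 / D ^ 2 with hc
  have hDpos : (0 : ℝ) < D := by linarith
  have hc0 : 0 < c := by positivity
  have hc1 : c < 1 := by
    rw [hc, div_lt_one (by positivity)]; nlinarith
  -- denominator positivity
  have hden : ∀ t : ℝ, 0 < t → 0 < 1 + D * t := fun t ht => by nlinarith
  -- derivative
  have hderiv : ∀ t : ℝ, 0 < t →
      HasDerivAt h ((1 - D ^ 2 * t) * (1 - t) / (t * (1 + D * t) ^ 2)) t := by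
    intro t ht
    have hdt : 1 + D * t ≠ 0 := ne_of_gt (hden t ht)
    have h1 : HasDerivAt Real.log (1 / t) t := by
      simpa [one_div] using Real.hasDerivAt_log (ne_of_gt ht)
    have h2 : HasDerivAt (fun t : ℝ => (D + 1) * (1 - t)) (-(D + 1)) t := by
      have := ((hasDerivAt_id t).const_sub 1).const_mul (D + 1)
      simpa using this
    have h3 : HasDerivAt (fun t : ℝ => 1 + D * t) D t := by
      have := ((hasDerivAt_id t).const_mul D).const_add 1
      simpa using this
    have h4 := h2.div h3 hdt
    have h5 := h1.add h4
    convert h5 using 1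
    · rfl
    · rfl
    · rfl
    field_simp
    ring
  have hcont : ∀ t : ℝ, 0 < t → ContinuousAt h t := fun t ht =>
    (hderiv t ht).continuousAt
  -- h 1 = 0
  have h1 : h 1 = 0 := by simp [hh]
  -- strict anti on [c,1]
  have hanti : StrictAntiOn h (Set.Icc c 1) := by
    apply strictAntiOn_of_deriv_neg (convex_Icc c 1)
    · exact fun t ht => (hcont t (lt_of_lt_of_le hc0 ht.1)).continuousWithinAt
    · intro t ht
      rw [interior_Icc] at ht
      have ht0 : 0 < t := lt_trans hc0 ht.1
      rw [(hderiv t ht0).deriv]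
      apply div_neg_of_neg_of_pos
      · have : 1 - D ^ 2 * t < 0 := by
          have : c < t := ht.1
          rw [hc] at this
          have := (div_lt_iff₀ (by positivity : (0:ℝ) < D ^ 2)).mp this
          nlinarith
        nlinarith [ht.2]
      · positivity
  -- strict mono on (0, c]
  have hmono : StrictMonoOn h (Set.Ioc 0 c) := by
    apply strictMonoOn_of_deriv_pos (convex_Ioc 0 c)
    · exact fun t ht => (hcont t ht.1).continuousWithinAt
    · intro t ht
      rw [interior_Ioc] at ht
      have ht0 : 0 < t := ht.1
      rw [(hderiv t ht0).deriv]
      apply div_pos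
      · have h1' : 0 < 1 - D ^ 2 * t := by
          have : t < c := ht.2
          rw [hc, lt_div_iff₀ (by positivity : (0:ℝ) < D ^ 2)] at this
          nlinarith
        have h2' : 0 < 1 - t := by nlinarith [lt_trans ht.2 hc1]
        positivity
      · positivity
  -- h positive on [c, 1)
  have hpos : ∀ t : ℝ, t ∈ Set.Ico c 1 → 0 < h t := by
    intro t ht
    have := hanti ⟨ht.1, le_of_lt ht.2⟩ (Set.right_mem_Icc.mpr (le_of_lt hc1)) ht.2
    rw [h1] at this; exact this
  have hhc : 0 < h c := hpos c ⟨le_refl c, hc1⟩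
  -- small point with h negative
  set t₀ : ℝ := min (Real.exp (-(D + 2))) (c / 2) with ht₀def
  have ht₀pos : 0 < t₀ := lt_min (Real.exp_pos _) (by positivity)
  have ht₀c : t₀ < c := lt_of_le_of_lt (min_le_right _ _) (by linarith)
  have ht₀neg : h t₀ < 0 := by
    have hlog : Real.log t₀ ≤ -(D + 2) := by
      calc Real.log t₀ ≤ Real.log (Real.exp (-(D + 2))) :=
            Real.log_le_log ht₀pos (min_le_left _ _)
        _ = -(D + 2) := Real.log_exp _
    have hfrac : (D + 1) * (1 - t₀) / (1 + D * t₀) < D + 1 := by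
      rw [div_lt_iff₀ (hden t₀ ht₀pos)]
      nlinarith
    rw [hh]; dsimp only
    linarith
  -- existence via IVT
  have hivt : ∃ t ∈ Set.Icc t₀ c, h t = 0 := by
    have hcont' : ContinuousOn h (Set.Icc t₀ c) := fun t ht =>
      (hcont t (lt_of_lt_of_le ht₀pos ht.1)).continuousWithinAt
    have := intermediate_value_Icc (le_of_lt ht₀c) hcont'
    have h0mem : (0 : ℝ) ∈ Set.Icc (h t₀) (h c) := ⟨le_of_lt ht₀neg, le_of_lt hhc⟩
    exact this h0mem
  obtain ⟨ts, htsmem, htszero⟩ := hivt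
  have hts0 : 0 < ts := lt_of_lt_of_le ht₀pos htsmem.1
  have hts1 : ts < 1 := lt_of_le_of_lt htsmem.2 hc1
  -- relation between F and h
  have key : ∀ t : ℝ, 0 < t →
      ((D + 1) * (1 - t) + (1 + D * t) * Real.log t = 0 ↔ h t = 0) := by
    intro t ht
    have hdt : (0:ℝ) < 1 + D * t := hden t ht
    rw [hh]; dsimp only
    constructor
    · intro hF
      field_simp
      linarith
    · intro hH
      have : (1 + D * t) * (Real.log t + (D + 1) * (1 - t) / (1 + D * t)) = 0 := by
        rw [hH]; ring
      rw [mul_add, mul_div_cancel₀ _ (ne_of_gt hdt)] at this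
      linarith
  refine ⟨ts, ⟨⟨hts0, hts1⟩, (key ts hts0).mpr htszero⟩, ?_⟩
  rintro t ⟨⟨ht0, ht1⟩, hF⟩
  have hht : h t = 0 := (key t ht0).mp hF
  have htc : t ≤ c := by
    by_contra hcon
    push_neg at hcon
    exact absurd hht (ne_of_gt (hpos t ⟨le_of_lt hcon, ht1⟩))
  exact hmono.injOn ⟨ht0, htc⟩ ⟨hts0, htsmem.2⟩ (by rw [hht, htszero])
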